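/- Let n > 1 be an integer and let w be a homogeneous weight on the ring ℤ_n of integers modulo n with average value λ. Then for every positive divisor m of n and every unit u of ℤ_n, w(u · (n/m)) = w(n/m) = λ·(1 − μ(m)/φ(m)), where μ is the classical number-theoretic Möbius function and φ is the classical number-theoretic Euler phi-function (Euler totient). -/

import Mathlib

/-- `w` is a homogeneous weight on the ring `R` with average value `lam ≥ 0`. -/
def IsHomogeneousWeight {R : Type*} [Ring R] (w : R → ℝ) (lam : ℝ) : Prop :=
  0 ≤ lam ∧ w 0 = 0 ∧
  (∀ x y : R, Ideal.span {x} = Ideal.span {y} → w x = w y) ∧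
  (∀ x : R, x ≠ 0 →
    ∑ᶠ y ∈ ((Ideal.span {x} : Ideal R) : Set R), w y =
      lam * (Nat.card (Ideal.span {x} : Ideal R) : ℝ))

private lemma span_natCast_gcd (n a : ℕ) :
    Ideal.span {(a : ZMod n)} = Ideal.span {((Nat.gcd a n : ℕ) : ZMod n)} := by
  apply le_antisymm
  · rw [Ideal.span_le, Set.singleton_subset_iff, SetLike.mem_coe, Ideal.mem_span_singleton]
    refine ⟨((a / Nat.gcd a n : ℕ) : ZMod n), ?_⟩
    rw [← Nat.cast_mul, Nat.mul_div_cancel' (Nat.gcd_dvd_left a n)]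
  · rw [Ideal.span_le, Set.singleton_subset_iff, SetLike.mem_coe, Ideal.mem_span_singleton]
    refine ⟨((Nat.gcdA a n : ℤ) : ZMod n), ?_⟩
    have hb : ((Nat.gcd a n : ℤ) : ZMod n) =
        ((a * Nat.gcdA a n + n * Nat.gcdB a n : ℤ) : ZMod n) := by
      rw [← Nat.gcd_eq_gcd_ab]
    push_cast at hb
    simpa [ZMod.natCast_self] using hb

private lemma weight_mul_eq (n : ℕ) (w : ZMod n → ℝ) (lam : ℝ)
    (hw : IsHomogeneousWeight w lam) (m : ℕ) (hm : 0 < m) (hmn : m ∣ n) (k : ℕ) :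
    w ((k * (n / m) : ℕ) : ZMod n) = w ((n / (m / Nat.gcd k m) : ℕ) : ZMod n) := by
  set q := n / m with hqdef
  have hq : m * q = n := Nat.mul_div_cancel' hmn
  have hgpos : 0 < Nat.gcd k m := Nat.gcd_pos_of_pos_right k hm
  have hgm : Nat.gcd k m ∣ m := Nat.gcd_dvd_right k m
  have hg : Nat.gcd (k * q) n = Nat.gcd k m * q := by
    rw [← hq]
    exact Nat.gcd_mul_right k q m
  have hdpos : 0 < m / Nat.gcd k m := Nat.div_pos (Nat.le_of_dvd hm hgm) hgpos
  have h2 : n / (m / Nat.gcd k m) = Nat.gcd k m * q := by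
    apply Nat.div_eq_of_eq_mul_left hdpos
    rw [mul_comm (Nat.gcd k m) q, mul_assoc, Nat.mul_div_cancel' hgm, mul_comm q m, hq]
  apply hw.2.2.1
  rw [span_natCast_gcd n (k * q), hg, ← h2]

private lemma sum_moebius_divisors (m : ℕ) (h : m ≠ 1) :
    ∑ d ∈ m.divisors, (ArithmeticFunction.moebius d : ℤ) = 0 := by
  have := ArithmeticFunction.coe_mul_zeta_apply
    (f := (ArithmeticFunction.moebius : ArithmeticFunction ℤ)) (x := m)
  rw [ArithmeticFunction.moebius_mul_coe_zeta] at this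
  simpa [ArithmeticFunction.one_apply, h] using this.symm

private lemma key_sum (n : ℕ) (hn : 1 < n) (w : ZMod n → ℝ) (lam : ℝ)
    (hw : IsHomogeneousWeight w lam) (m : ℕ) (hm1 : 1 < m) (hmn : m ∣ n) :
    lam * m = ∑ d ∈ m.divisors, (Nat.totient d : ℝ) * w ((n / d : ℕ) : ZMod n) := by
  haveI : NeZero n := ⟨by omega⟩
  haveI : NeZero m := ⟨by omega⟩
  have hn0 : 0 < n := by omega
  set q := n / m with hqdef
  have hq : m * q = n := Nat.mul_div_cancel' hmn
  have hq0 : 0 < q := Nat.div_pos (Nat.le_of_dvd hn0 hmn) (by omega)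
  set x : ZMod n := ((q : ℕ) : ZMod n) with hxdef
  have hx : x ≠ 0 := by
    rw [hxdef, Ne, ZMod.natCast_eq_zero_iff]
    intro h
    have hlt : q < n := Nat.div_lt_self hn0 hm1
    have := Nat.le_of_dvd hq0 h
    omega
  set f : ZMod m → ZMod n := fun k => ((k.val * q : ℕ) : ZMod n) with hfdef
  have hfinj : Function.Injective f := by
    intro k k' h
    rw [hfdef] at h
    simp only [ZMod.natCast_eq_natCast_iff] at h
    rw [← hq] at h
    have h' := Nat.ModEq.mul_right_cancel' (by omega : q ≠ 0) h
    have h1 : k.val % m = k'.val % m := h'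
    rw [Nat.mod_eq_of_lt (ZMod.val_lt k), Nat.mod_eq_of_lt (ZMod.val_lt k')] at h1
    have := congrArg (fun t : ℕ => (t : ZMod m)) h1
    simpa [ZMod.natCast_rightInverse k, ZMod.natCast_rightInverse k'] using this
  have hrange : Set.range f = ((Ideal.span {x} : Ideal (ZMod n)) : Set (ZMod n)) := by
    ext y
    constructor
    · rintro ⟨k, rfl⟩
      rw [SetLike.mem_coe, Ideal.mem_span_singleton]
      exact ⟨((k.val : ℕ) : ZMod n), by rw [hfdef]; push_cast; ring⟩
    · intro hy
      rw [SetLike.mem_coe, Ideal.mem_span_singleton] at hy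
      obtain ⟨c, hc⟩ := hy
      refine ⟨((c.val : ℕ) : ZMod m), ?_⟩
      have hmod' : ((c.val : ZMod m)).val * q ≡ c.val * q [MOD m * q] :=
        Nat.ModEq.mul_right' q (by rw [ZMod.val_natCast]; exact Nat.mod_modEq _ _)
      rw [hq] at hmod'
      have hmod := hmod' 
      rw [hfdef]
      show (((((c.val : ℕ) : ZMod m)).val * q : ℕ) : ZMod n) = y
      rw [ZMod.natCast_eq_natCast_iff _ _ _ |>.mpr hmod]
      rw [hc, hxdef]
      push_cast
      rw [ZMod.natCast_val, ZMod.cast_id]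
      ring
  have hcard : (Nat.card (Ideal.span {x} : Ideal (ZMod n)) : ℝ) = (m : ℝ) := by
    have h1 : Nat.card (Ideal.span {x} : Ideal (ZMod n)) = Nat.card (Set.range f) :=
      Nat.card_congr (Equiv.setCongr hrange.symm)
    rw [h1, Nat.card_range_of_injective hfinj, Nat.card_zmod]
  have hsum : ∑ᶠ y ∈ ((Ideal.span {x} : Ideal (ZMod n)) : Set (ZMod n)), w y
      = ∑ k : ZMod m, w (f k) := by
    rw [← hrange, finsum_mem_range hfinj, finsum_eq_sum_of_fintype]
  have hkey : lam * m = ∑ k : ZMod m, w (f k) := by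
    rw [← hsum, hw.2.2.2 x hx, hcard]
  rw [hkey]
  have hmaps : ∀ k : ZMod m, k ∈ (Finset.univ : Finset (ZMod m)) →
      addOrderOf k ∈ m.divisors := by
    intro k _
    rw [Nat.mem_divisors]
    refine ⟨?_, by omega⟩
    simpa [ZMod.card] using addOrderOf_dvd_card (x := k)
  rw [← Finset.sum_fiberwise_of_maps_to hmaps (fun k => w (f k))]
  apply Finset.sum_congr rfl
  intro d hd
  have hdm : d ∣ m := (Nat.mem_divisors.mp hd).1
  have hterm : ∀ k ∈ Finset.univ.filter (fun k : ZMod m => addOrderOf k = d),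
      w (f k) = w ((n / d : ℕ) : ZMod n) := by
    intro k hk
    rw [Finset.mem_filter] at hk
    have hord : addOrderOf k = m / Nat.gcd k.val m := by
      conv_lhs => rw [← ZMod.natCast_rightInverse k]
      rw [ZMod.addOrderOf_coe k.val (NeZero.ne m), Nat.gcd_comm]
    have := weight_mul_eq n w lam hw m (by omega) hmn k.val
    rw [hfdef]
    simp only []
    rw [this, ← hord, hk.2]
  rw [Finset.sum_congr rfl hterm, Finset.sum_const]
  have hcardfib : (Finset.univ.filter (fun k : ZMod m => addOrderOf k = d)).card
      = Nat.totient d := by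
    have hd' : d ∣ Fintype.card (ZMod m) := by rwa [ZMod.card]
    simpa using IsAddCyclic.card_addOrderOf_eq_totient (α := ZMod m) hd'
  rw [hcardfib, nsmul_eq_mul]

/-- Let `n > 1` and let `w` be a homogeneous weight on `ℤ_n = ZMod n` with
average value `λ`. Then for every positive divisor `m` of `n` and every unit `u` of
`ℤ_n`, `w(u ⬝ (n/m)) = w(n/m) = λ (1 - μ(m)/φ(m))`, where `μ` is the classical
number-theoretic Möbius function and `φ` the Euler totient function. -/
theorem zmod_homogeneous_weight_formula (n : ℕ) (hn : 1 < n)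
    (w : ZMod n → ℝ) (lam : ℝ) (hw : IsHomogeneousWeight w lam)
    (m : ℕ) (hm : 0 < m) (hmn : m ∣ n) (u : (ZMod n)ˣ) :
    w ((u : ZMod n) * ((n / m : ℕ) : ZMod n)) = w (((n / m : ℕ) : ZMod n)) ∧
    w (((n / m : ℕ) : ZMod n)) =
      lam * (1 - (ArithmeticFunction.moebius m : ℝ) / (Nat.totient m : ℝ)) := by
  constructor
  · exact hw.2.2.1 _ _ (Ideal.span_singleton_mul_left_unit u.isUnit _)
  · clear u
    induction m using Nat.strong_induction_on with
    | _ m ih =>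
      rcases eq_or_lt_of_le (by omega : 1 ≤ m) with h1 | h1
      · -- m = 1
        have hm1 : m = 1 := h1.symm
        subst hm1
        simp only [Nat.div_one]
        rw [show ((n : ℕ) : ZMod n) = 0 from ZMod.natCast_self n, hw.2.1]
        simp
      · -- 1 < m
        have key := key_sum n hn w lam hw m h1 hmn
        have hmD : m ∈ m.divisors := Nat.mem_divisors_self m (by omega)
        rw [← Finset.add_sum_erase _ _ hmD] at key
        have hih : ∀ d ∈ m.divisors.erase m,
            (Nat.totient d : ℝ) * w ((n / d : ℕ) : ZMod n)
              = lam * ((Nat.totient d : ℝ) - (ArithmeticFunction.moebius d : ℝ)) := by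
          intro d hd
          rw [Finset.mem_erase] at hd
          have hdm : d ∣ m := (Nat.mem_divisors.mp hd.2).1
          have hd0 : 0 < d := Nat.pos_of_dvd_of_pos hdm (by omega)
          have hdlt : d < m := lt_of_le_of_ne (Nat.le_of_dvd (by omega) hdm) hd.1
          have hφ : (Nat.totient d : ℝ) ≠ 0 := by
            exact_mod_cast (Nat.totient_pos.mpr hd0).ne'
          rw [ih d hdlt hd0 (hdm.trans hmn)]
          field_simp
        rw [Finset.sum_congr rfl hih, ← Finset.mul_sum] at key
        have hsub : ∑ d ∈ m.divisors.erase m,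
            ((Nat.totient d : ℝ) - (ArithmeticFunction.moebius d : ℝ))
            = (m : ℝ) - (Nat.totient m : ℝ) + (ArithmeticFunction.moebius m : ℝ) := by
          rw [Finset.sum_sub_distrib, Finset.sum_erase_eq_sub hmD,
            Finset.sum_erase_eq_sub hmD]
          have h1 : ∑ d ∈ m.divisors, (Nat.totient d : ℝ) = (m : ℝ) := by
            exact_mod_cast Nat.sum_totient m
          have h2 : ∑ d ∈ m.divisors, (ArithmeticFunction.moebius d : ℝ) = 0 := by
            exact_mod_cast sum_moebius_divisors m (by omega)
          rw [h1, h2]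
          ring
        rw [hsub] at key
        have hφm : (Nat.totient m : ℝ) ≠ 0 := by
          exact_mod_cast (Nat.totient_pos.mpr hm).ne'
        have hEq : (Nat.totient m : ℝ) * w ((n / m : ℕ) : ZMod n)
            = lam * ((Nat.totient m : ℝ) - (ArithmeticFunction.moebius m : ℝ)) := by
          linarith [key]
        field_simp
        linarith [hEq]
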